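/- Let n ∈ ℕ, let W : Fin n → Fin n → ℝ be a symmetric matrix with nonnegative entries, let y' : Fin n → ℝ take values in {0,1}, let m ≥ 0, and let α ∈ (0,1). Suppose ŷ minimizes Σ_i |y i − y' i| over the LP feasible set {y : ∀ i, y i ∈ [0,1] and Σ_i Σ_j W i j * |y i − y j| ≤ m}, every component of ŷ lies in {0, α, 1}, and the ILP feasible set {y : ∀ i, y i ∈ {0,1} and total error ≤ m} is nonempty with optimal objective value OPT_ILP. Let N_{0α} = #{i : y' i = 0, ŷ i = α} and N_{1α} = #{i : y' i = 1, ŷ i = α}. If ȳ is obtained from ŷ by replacing every α with 1, then Σ_i |ȳ i − y' i| ≤ OPT_ILP + (1 − α)(N_{0α} − N_{1α}); if ȳ is obtained by replacing every α with 0, then Σ_i |ȳ i − y' i| ≤ OPT_ILP + α(N_{1α} − N_{0α}). -/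
import Mathlib


open Finset

open scoped Classical in
/-- Lemma 4: The objective of the rounded solution exceeds the ILP
optimum by at most (1−α)(N_{0α} − N_{1α}) when rounding α to 1, and by at most
α(N_{1α} − N_{0α}) when rounding α to 0. -/
theorem rounding_optimality_bound (n : ℕ) (W : Fin n → Fin n → ℝ)
    (hWsymm : ∀ i j, W i j = W j i) (hWnonneg : ∀ i j, 0 ≤ W i j)
    (y' : Fin n → ℝ) (hy' : ∀ i, y' i = 0 ∨ y' i = 1)
    (m : ℝ) (hm : 0 ≤ m) (α : ℝ) (hα : α ∈ Set.Ioo (0:ℝ) 1)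
    (yhat : Fin n → ℝ)
    (hfeas1 : ∀ i, yhat i ∈ Set.Icc (0:ℝ) 1)
    (hfeas2 : ∑ i, ∑ j, W i j * |yhat i - yhat j| ≤ m)
    (hopt : ∀ y : Fin n → ℝ, (∀ i, y i ∈ Set.Icc (0:ℝ) 1) →
      ∑ i, ∑ j, W i j * |y i - y j| ≤ m →
      ∑ i, |yhat i - y' i| ≤ ∑ i, |y i - y' i|)
    (hval : ∀ i, yhat i = 0 ∨ yhat i = α ∨ yhat i = 1)
    (OPT_ILP : ℝ)
    (hILP : IsLeast {c : ℝ | ∃ y : Fin n → ℝ, (∀ i, y i = 0 ∨ y i = 1) ∧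
      (∑ i, ∑ j, W i j * |y i - y j| ≤ m) ∧ c = ∑ i, |y i - y' i|} OPT_ILP) :
    let N0α := (Finset.univ.filter (fun i => y' i = 0 ∧ yhat i = α)).card
    let N1α := (Finset.univ.filter (fun i => y' i = 1 ∧ yhat i = α)).card
    (∑ i, |(if yhat i = α then (1:ℝ) else yhat i) - y' i|
        ≤ OPT_ILP + (1 - α) * ((N0α : ℝ) - (N1α : ℝ))) ∧
    (∑ i, |(if yhat i = α then (0:ℝ) else yhat i) - y' i|
        ≤ OPT_ILP + α * ((N1α : ℝ) - (N0α : ℝ))) := by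

  obtain ⟨⟨y, hy01, hyfeas, hyval⟩, -⟩ := hILP
  obtain ⟨hα0, hα1⟩ := hα
  have hyIcc : ∀ i, y i ∈ Set.Icc (0:ℝ) 1 := by
    intro i; rcases hy01 i with h | h <;> simp [h]
  have hhat : ∑ i, |yhat i - y' i| ≤ OPT_ILP := by
    rw [hyval]; exact hopt y hyIcc hyfeas
  intro N0α N1α
  have hS0 : ∑ i : Fin n, (if y' i = 0 ∧ yhat i = α then (1:ℝ) else 0) = (N0α : ℝ) := by
    simp [N0α, Finset.sum_boole]
  have hS1 : ∑ i : Fin n, (if y' i = 1 ∧ yhat i = α then (1:ℝ) else 0) = (N1α : ℝ) := by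
    simp [N1α, Finset.sum_boole]
  have key1 : ∀ i, |(if yhat i = α then (1:ℝ) else yhat i) - y' i|
      = |yhat i - y' i| + (1-α) * ((if y' i = 0 ∧ yhat i = α then (1:ℝ) else 0)
        - (if y' i = 1 ∧ yhat i = α then (1:ℝ) else 0)) := by
    intro i
    rcases hval i with h | h | h <;> rcases hy' i with h' | h' <;>
      rw [h, h'] <;>
      simp [hα0.ne, hα0.ne', hα1.ne, hα1.ne', abs_of_nonneg, abs_of_nonpos, hα0.le, hα1.le,
        abs_of_pos hα0, abs_sub_comm, abs_of_pos (sub_pos.mpr hα1)] <;> ring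
  have key2 : ∀ i, |(if yhat i = α then (0:ℝ) else yhat i) - y' i|
      = |yhat i - y' i| + α * ((if y' i = 1 ∧ yhat i = α then (1:ℝ) else 0)
        - (if y' i = 0 ∧ yhat i = α then (1:ℝ) else 0)) := by
    intro i
    rcases hval i with h | h | h <;> rcases hy' i with h' | h' <;>
      rw [h, h'] <;>
      simp [hα0.ne, hα0.ne', hα1.ne, hα1.ne', abs_of_nonneg, abs_of_nonpos, hα0.le, hα1.le,
        abs_of_pos hα0, abs_sub_comm, abs_of_pos (sub_pos.mpr hα1)] <;> ring
  constructor
  · have : ∑ i, |(if yhat i = α then (1:ℝ) else yhat i) - y' i|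
        = ∑ i, |yhat i - y' i| + (1-α) * ((N0α : ℝ) - (N1α : ℝ)) := by
      rw [Finset.sum_congr rfl (fun i _ => key1 i), Finset.sum_add_distrib,
        ← Finset.mul_sum, Finset.sum_sub_distrib, hS0, hS1]
    rw [this]; linarith
  · have : ∑ i, |(if yhat i = α then (0:ℝ) else yhat i) - y' i|
        = ∑ i, |yhat i - y' i| + α * ((N1α : ℝ) - (N0α : ℝ)) := by
      rw [Finset.sum_congr rfl (fun i _ => key2 i), Finset.sum_add_distrib,
        ← Finset.mul_sum, Finset.sum_sub_distrib, hS1, hS0]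
    rw [this]; linarith
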